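/- The almost complex structure I is integrable in the following sense: for all X, Y ∈ 𝔪, the 2-forms d_Ma and d_Ma' are of type (1,1) with respect to I, i.e. d_Ma(IX,IY) = d_Ma(X,Y) and d_Ma'(IX,IY) = d_Ma'(X,Y), while the complex 2-form d_Mp + i·d_Mp' is of type (2,0) with respect to I, i.e. d_Mp(IX,Y) = −d_Mp'(X,Y) and d_Mp'(IX,Y) = d_Mp(X,Y); and the analogous identities obtained by the simultaneous cyclic substitutions (a,a',p,p') → (b,b',q,q') → (c,c',r,r') → (a,a',p,p') also hold. -/

import Mathlib

/-!
Common setup: 𝔤 = 𝔰𝔬(7) realised as real skew-symmetric 7×7 matrices with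
bracket `bk X Y = X*Y - Y*X`; the matrices A, B, C, A', B', C', P, Q, R, P', Q', R', E;
the subspaces 𝔪 (`mm`) and 𝔲(3) (`u3`); the dual functionals a, …, r' (written
`fa, …, fr'`), given by the explicit formulas that characterise them as the unique
linear functionals on 𝔰𝔬(7) vanishing on 𝔲(3) whose restrictions to 𝔪 are dual to
the chosen basis; the invariant forms; the endomorphisms I, J, K; and the
Chevalley–Eilenberg differentials `dM1`, `dM2` restricted to 𝔪.
-/

open Matrix

noncomputable section

/-- Ambient space of real 7×7 matrices (rows/columns indexed by `Fin 7`). -/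
abbrev M7 : Type := Matrix (Fin 7) (Fin 7) ℝ

/-- `Eij i j`: the skew matrix with `(i,j)` entry `1`, `(j,i)` entry `-1`, all others `0`. -/
def Eij (i j : Fin 7) : M7 := Matrix.single i j 1 - Matrix.single j i 1

def mA  : M7 := Eij 0 1
def mB  : M7 := Eij 0 2
def mC  : M7 := Eij 0 3
def mA' : M7 := Eij 0 4
def mB' : M7 := Eij 0 5
def mC' : M7 := Eij 0 6
def mP  : M7 := Eij 2 3 - Eij 5 6
def mQ  : M7 := Eij 3 1 - Eij 6 4
def mR  : M7 := Eij 1 2 - Eij 4 5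
def mP' : M7 := Eij 2 6 - Eij 3 5
def mQ' : M7 := Eij 3 4 - Eij 1 6
def mR' : M7 := Eij 1 5 - Eij 2 4
def mE  : M7 := Eij 1 4 + Eij 2 5 + Eij 3 6

/-- The Lie bracket `[X,Y] = XY - YX`. -/
def bk (X Y : M7) : M7 := X * Y - Y * X

/-- 𝔰𝔬(7): the skew-symmetric matrices. -/
def so7 : Set M7 := {X : M7 | Xᵀ = -X}

/-- The first standard basis vector e₀ of ℝ⁷. -/
def e0 : Fin 7 → ℝ := fun i => if i = 0 then 1 else 0

/-- 𝔲(3) = {X ∈ 𝔰𝔬(7) : X e₀ = 0 and XE = EX}. -/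
def u3 : Set M7 := {X : M7 | Xᵀ = -X ∧ X.mulVec e0 = 0 ∧ X * mE = mE * X}

/-- 𝔪: the span of the twelve matrices A, …, R'. -/
def mm : Submodule ℝ M7 :=
  Submodule.span ℝ ({mA, mB, mC, mA', mB', mC', mP, mQ, mR, mP', mQ', mR'} : Set M7)

/- The linear functionals on 𝔰𝔬(7) vanishing on 𝔲(3) whose restrictions to 𝔪 form the
dual basis of the basis A, …, R' (given by their explicit formulas on skew matrices,
extended to all of `M7`). -/
def fa  (X : M7) : ℝ := (X 0 1 - X 1 0) / 2
def fb  (X : M7) : ℝ := (X 0 2 - X 2 0) / 2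
def fc  (X : M7) : ℝ := (X 0 3 - X 3 0) / 2
def fa' (X : M7) : ℝ := (X 0 4 - X 4 0) / 2
def fb' (X : M7) : ℝ := (X 0 5 - X 5 0) / 2
def fc' (X : M7) : ℝ := (X 0 6 - X 6 0) / 2
def fp  (X : M7) : ℝ := (X 2 3 - X 3 2 - X 5 6 + X 6 5) / 4
def fq  (X : M7) : ℝ := (X 3 1 - X 1 3 - X 6 4 + X 4 6) / 4
def fr  (X : M7) : ℝ := (X 1 2 - X 2 1 - X 4 5 + X 5 4) / 4
def fp' (X : M7) : ℝ := (X 2 6 - X 6 2 - X 3 5 + X 5 3) / 4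
def fq' (X : M7) : ℝ := (X 3 4 - X 4 3 - X 1 6 + X 6 1) / 4
def fr' (X : M7) : ℝ := (X 1 5 - X 5 1 - X 2 4 + X 4 2) / 4

/-- Wedge of two 1-forms: `(α∧β)(X,Y) = α(X)β(Y) - β(X)α(Y)`. -/
def wdg2 (α β : M7 → ℝ) (X Y : M7) : ℝ := α X * β Y - β X * α Y

/-- Wedge of three 1-forms (determinant convention). -/
def wdg3 (α β γ : M7 → ℝ) (X Y Z : M7) : ℝ :=
  α X * β Y * γ Z - α X * γ Y * β Z - β X * α Y * γ Z
    + β X * γ Y * α Z + γ X * α Y * β Z - γ X * β Y * α Z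

/-- ω₀ = a'∧a + b'∧b + c'∧c. -/
def om0 (X Y : M7) : ℝ := wdg2 fa' fa X Y + wdg2 fb' fb X Y + wdg2 fc' fc X Y

/-- ω̃₀ = p'∧p + q'∧q + r'∧r. -/
def omt0 (X Y : M7) : ℝ := wdg2 fp' fp X Y + wdg2 fq' fq X Y + wdg2 fr' fr X Y

/-- ω_J = p∧a - p'∧a' + q∧b - q'∧b' + r∧c - r'∧c'. -/
def omJ (X Y : M7) : ℝ :=
  wdg2 fp fa X Y - wdg2 fp' fa' X Y + wdg2 fq fb X Y - wdg2 fq' fb' X Y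
    + wdg2 fr fc X Y - wdg2 fr' fc' X Y

/-- ω_K = p'∧a + p∧a' + q'∧b + q∧b' + r'∧c + r∧c'. -/
def omK (X Y : M7) : ℝ :=
  wdg2 fp' fa X Y + wdg2 fp fa' X Y + wdg2 fq' fb X Y + wdg2 fq fb' X Y
    + wdg2 fr' fc X Y + wdg2 fr fc' X Y

/-- ω_I = λω₀ + μω̃₀. -/
def omI (lm mu : ℝ) (X Y : M7) : ℝ := lm * om0 X Y + mu * omt0 X Y

/-- The metric g = λ(a⊗a + … + c'⊗c') + μ(p⊗p + … + r'⊗r'). -/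
def gmet (lm mu : ℝ) (X Y : M7) : ℝ :=
  lm * (fa X * fa Y + fb X * fb Y + fc X * fc Y
      + fa' X * fa' Y + fb' X * fb' Y + fc' X * fc' Y)
  + mu * (fp X * fp Y + fq X * fq Y + fr X * fr Y
      + fp' X * fp' Y + fq' X * fq' Y + fr' X * fr' Y)

/-- The endomorphism I of 𝔪 (extended to `M7` via the dual functionals):
A↦A', …, R↦R', A'↦-A, …, R'↦-R. -/
def Iop (X : M7) : M7 :=
  fa X • mA' + fb X • mB' + fc X • mC' + fp X • mP' + fq X • mQ' + fr X • mR'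
    - fa' X • mA - fb' X • mB - fc' X • mC - fp' X • mP - fq' X • mQ - fr' X • mR

/-- The endomorphism J of 𝔪: A↦λP, …, C'↦-λR', P↦-μA, …, R'↦μC'. -/
def Jop (lm mu : ℝ) (X : M7) : M7 :=
  (lm * fa X) • mP + (lm * fb X) • mQ + (lm * fc X) • mR
    - (lm * fa' X) • mP' - (lm * fb' X) • mQ' - (lm * fc' X) • mR'
    - (mu * fp X) • mA - (mu * fq X) • mB - (mu * fr X) • mC
    + (mu * fp' X) • mA' + (mu * fq' X) • mB' + (mu * fr' X) • mC'

/-- The endomorphism K of 𝔪: A↦λP', …, C'↦λR, P'↦-μA, …, R↦-μC'. -/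
def Kop (lm mu : ℝ) (X : M7) : M7 :=
  (lm * fa X) • mP' + (lm * fb X) • mQ' + (lm * fc X) • mR'
    + (lm * fa' X) • mP + (lm * fb' X) • mQ + (lm * fc' X) • mR
    - (mu * fp' X) • mA - (mu * fq' X) • mB - (mu * fr' X) • mC
    - (mu * fp X) • mA' - (mu * fq X) • mB' - (mu * fr X) • mC'

/-- `d_Mα(X,Y) = -α([X,Y])` for a 1-form α. -/
def dM1 (α : M7 → ℝ) (X Y : M7) : ℝ := -α (bk X Y)

/-- `d_Mω(X,Y,Z) = -ω([X,Y],Z) + ω([X,Z],Y) - ω([Y,Z],X)` for a 2-form ω. -/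
def dM2 (ω : M7 → M7 → ℝ) (X Y Z : M7) : ℝ :=
  -ω (bk X Y) Z + ω (bk X Z) Y - ω (bk Y Z) X

/-- For an endomorphism T and a 3-form β, `(Tβ)(X,Y,Z) = -β(TX,TY,TZ)`. -/
def act3 (T : M7 → M7) (β : M7 → M7 → M7 → ℝ) (X Y Z : M7) : ℝ :=
  -β (T X) (T Y) (T Z)

/-- Φ = Σ_cyc (a∧b∧r - a'∧b'∧r + a∧b'∧r' + a'∧b∧r'). -/
def Phi (X Y Z : M7) : ℝ :=
  (wdg3 fa fb fr X Y Z - wdg3 fa' fb' fr X Y Z + wdg3 fa fb' fr' X Y Z + wdg3 fa' fb fr' X Y Z)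
  + (wdg3 fb fc fp X Y Z - wdg3 fb' fc' fp X Y Z + wdg3 fb fc' fp' X Y Z + wdg3 fb' fc fp' X Y Z)
  + (wdg3 fc fa fq X Y Z - wdg3 fc' fa' fq X Y Z + wdg3 fc fa' fq' X Y Z + wdg3 fc' fa fq' X Y Z)

/-- Ψ = Σ_cyc (p∧q∧r - 3 p∧q'∧r'). -/
def Psi (X Y Z : M7) : ℝ :=
  (wdg3 fp fq fr X Y Z - 3 * wdg3 fp fq' fr' X Y Z)
  + (wdg3 fq fr fp X Y Z - 3 * wdg3 fq fr' fp' X Y Z)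
  + (wdg3 fr fp fq X Y Z - 3 * wdg3 fr fp' fq' X Y Z)

/-- β_I = J d_Mω_J + K d_Mω_K. -/
def betaI (lm mu : ℝ) (X Y Z : M7) : ℝ :=
  act3 (Jop lm mu) (dM2 omJ) X Y Z + act3 (Kop lm mu) (dM2 omK) X Y Z

/-- β_J = K d_Mω_K + I d_Mω_I. -/
def betaJ (lm mu : ℝ) (X Y Z : M7) : ℝ :=
  act3 (Kop lm mu) (dM2 omK) X Y Z + act3 Iop (dM2 (omI lm mu)) X Y Z

/-- β_K = I d_Mω_I + J d_Mω_J. -/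
def betaK (lm mu : ℝ) (X Y Z : M7) : ℝ :=
  act3 Iop (dM2 (omI lm mu)) X Y Z + act3 (Jop lm mu) (dM2 omJ) X Y Z

/-- ψ⁽³⁾ = (1/12)(β_I + β_J + β_K). -/
def psi3 (lm mu : ℝ) (X Y Z : M7) : ℝ :=
  (1/12) * (betaI lm mu X Y Z + betaJ lm mu X Y Z + betaK lm mu X Y Z)

end


noncomputable section AuxStmt19

def lc (x0 x1 x2 x3 x4 x5 x6 x7 x8 x9 x10 x11 : ℝ) : M7 :=
  x0 • mA + (x1 • mB + (x2 • mC + (x3 • mA' + (x4 • mB' + (x5 • mC' +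
  (x6 • mP + (x7 • mQ + (x8 • mR + (x9 • mP' + (x10 • mQ' + x11 • mR'))))))))))

variable {x0 x1 x2 x3 x4 x5 x6 x7 x8 x9 x10 x11 : ℝ}

@[simp] lemma lc_apply_0_0 : lc x0 x1 x2 x3 x4 x5 x6 x7 x8 x9 x10 x11 0 0 = 0 := by simp (config := { decide := true }) only [lc, mA, mB, mC, mA', mB', mC', mP, mQ, mR, mP', mQ', mR', Eij, Matrix.single, Matrix.add_apply, Matrix.sub_apply, Matrix.smul_apply, Matrix.of_apply, smul_eq_mul]; norm_num
@[simp] lemma lc_apply_0_1 : lc x0 x1 x2 x3 x4 x5 x6 x7 x8 x9 x10 x11 0 1 = x0 := by simp (config := { decide := true }) only [lc, mA, mB, mC, mA', mB', mC', mP, mQ, mR, mP', mQ', mR', Eij, Matrix.single, Matrix.add_apply, Matrix.sub_apply, Matrix.smul_apply, Matrix.of_apply, smul_eq_mul]; norm_num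
@[simp] lemma lc_apply_0_2 : lc x0 x1 x2 x3 x4 x5 x6 x7 x8 x9 x10 x11 0 2 = x1 := by simp (config := { decide := true }) only [lc, mA, mB, mC, mA', mB', mC', mP, mQ, mR, mP', mQ', mR', Eij, Matrix.single, Matrix.add_apply, Matrix.sub_apply, Matrix.smul_apply, Matrix.of_apply, smul_eq_mul]; norm_num
@[simp] lemma lc_apply_0_3 : lc x0 x1 x2 x3 x4 x5 x6 x7 x8 x9 x10 x11 0 3 = x2 := by simp (config := { decide := true }) only [lc, mA, mB, mC, mA', mB', mC', mP, mQ, mR, mP', mQ', mR', Eij, Matrix.single, Matrix.add_apply, Matrix.sub_apply, Matrix.smul_apply, Matrix.of_apply, smul_eq_mul]; norm_num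
@[simp] lemma lc_apply_0_4 : lc x0 x1 x2 x3 x4 x5 x6 x7 x8 x9 x10 x11 0 4 = x3 := by simp (config := { decide := true }) only [lc, mA, mB, mC, mA', mB', mC', mP, mQ, mR, mP', mQ', mR', Eij, Matrix.single, Matrix.add_apply, Matrix.sub_apply, Matrix.smul_apply, Matrix.of_apply, smul_eq_mul]; norm_num
@[simp] lemma lc_apply_0_5 : lc x0 x1 x2 x3 x4 x5 x6 x7 x8 x9 x10 x11 0 5 = x4 := by simp (config := { decide := true }) only [lc, mA, mB, mC, mA', mB', mC', mP, mQ, mR, mP', mQ', mR', Eij, Matrix.single, Matrix.add_apply, Matrix.sub_apply, Matrix.smul_apply, Matrix.of_apply, smul_eq_mul]; norm_num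
@[simp] lemma lc_apply_0_6 : lc x0 x1 x2 x3 x4 x5 x6 x7 x8 x9 x10 x11 0 6 = x5 := by simp (config := { decide := true }) only [lc, mA, mB, mC, mA', mB', mC', mP, mQ, mR, mP', mQ', mR', Eij, Matrix.single, Matrix.add_apply, Matrix.sub_apply, Matrix.smul_apply, Matrix.of_apply, smul_eq_mul]; norm_num
@[simp] lemma lc_apply_1_0 : lc x0 x1 x2 x3 x4 x5 x6 x7 x8 x9 x10 x11 1 0 = -x0 := by simp (config := { decide := true }) only [lc, mA, mB, mC, mA', mB', mC', mP, mQ, mR, mP', mQ', mR', Eij, Matrix.single, Matrix.add_apply, Matrix.sub_apply, Matrix.smul_apply, Matrix.of_apply, smul_eq_mul]; norm_num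
@[simp] lemma lc_apply_1_1 : lc x0 x1 x2 x3 x4 x5 x6 x7 x8 x9 x10 x11 1 1 = 0 := by simp (config := { decide := true }) only [lc, mA, mB, mC, mA', mB', mC', mP, mQ, mR, mP', mQ', mR', Eij, Matrix.single, Matrix.add_apply, Matrix.sub_apply, Matrix.smul_apply, Matrix.of_apply, smul_eq_mul]; norm_num
@[simp] lemma lc_apply_1_2 : lc x0 x1 x2 x3 x4 x5 x6 x7 x8 x9 x10 x11 1 2 = x8 := by simp (config := { decide := true }) only [lc, mA, mB, mC, mA', mB', mC', mP, mQ, mR, mP', mQ', mR', Eij, Matrix.single, Matrix.add_apply, Matrix.sub_apply, Matrix.smul_apply, Matrix.of_apply, smul_eq_mul]; norm_num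
@[simp] lemma lc_apply_1_3 : lc x0 x1 x2 x3 x4 x5 x6 x7 x8 x9 x10 x11 1 3 = -x7 := by simp (config := { decide := true }) only [lc, mA, mB, mC, mA', mB', mC', mP, mQ, mR, mP', mQ', mR', Eij, Matrix.single, Matrix.add_apply, Matrix.sub_apply, Matrix.smul_apply, Matrix.of_apply, smul_eq_mul]; norm_num
@[simp] lemma lc_apply_1_4 : lc x0 x1 x2 x3 x4 x5 x6 x7 x8 x9 x10 x11 1 4 = 0 := by simp (config := { decide := true }) only [lc, mA, mB, mC, mA', mB', mC', mP, mQ, mR, mP', mQ', mR', Eij, Matrix.single, Matrix.add_apply, Matrix.sub_apply, Matrix.smul_apply, Matrix.of_apply, smul_eq_mul]; norm_num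
@[simp] lemma lc_apply_1_5 : lc x0 x1 x2 x3 x4 x5 x6 x7 x8 x9 x10 x11 1 5 = x11 := by simp (config := { decide := true }) only [lc, mA, mB, mC, mA', mB', mC', mP, mQ, mR, mP', mQ', mR', Eij, Matrix.single, Matrix.add_apply, Matrix.sub_apply, Matrix.smul_apply, Matrix.of_apply, smul_eq_mul]; norm_num
@[simp] lemma lc_apply_1_6 : lc x0 x1 x2 x3 x4 x5 x6 x7 x8 x9 x10 x11 1 6 = -x10 := by simp (config := { decide := true }) only [lc, mA, mB, mC, mA', mB', mC', mP, mQ, mR, mP', mQ', mR', Eij, Matrix.single, Matrix.add_apply, Matrix.sub_apply, Matrix.smul_apply, Matrix.of_apply, smul_eq_mul]; norm_num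
@[simp] lemma lc_apply_2_0 : lc x0 x1 x2 x3 x4 x5 x6 x7 x8 x9 x10 x11 2 0 = -x1 := by simp (config := { decide := true }) only [lc, mA, mB, mC, mA', mB', mC', mP, mQ, mR, mP', mQ', mR', Eij, Matrix.single, Matrix.add_apply, Matrix.sub_apply, Matrix.smul_apply, Matrix.of_apply, smul_eq_mul]; norm_num
@[simp] lemma lc_apply_2_1 : lc x0 x1 x2 x3 x4 x5 x6 x7 x8 x9 x10 x11 2 1 = -x8 := by simp (config := { decide := true }) only [lc, mA, mB, mC, mA', mB', mC', mP, mQ, mR, mP', mQ', mR', Eij, Matrix.single, Matrix.add_apply, Matrix.sub_apply, Matrix.smul_apply, Matrix.of_apply, smul_eq_mul]; norm_num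
@[simp] lemma lc_apply_2_2 : lc x0 x1 x2 x3 x4 x5 x6 x7 x8 x9 x10 x11 2 2 = 0 := by simp (config := { decide := true }) only [lc, mA, mB, mC, mA', mB', mC', mP, mQ, mR, mP', mQ', mR', Eij, Matrix.single, Matrix.add_apply, Matrix.sub_apply, Matrix.smul_apply, Matrix.of_apply, smul_eq_mul]; norm_num
@[simp] lemma lc_apply_2_3 : lc x0 x1 x2 x3 x4 x5 x6 x7 x8 x9 x10 x11 2 3 = x6 := by simp (config := { decide := true }) only [lc, mA, mB, mC, mA', mB', mC', mP, mQ, mR, mP', mQ', mR', Eij, Matrix.single, Matrix.add_apply, Matrix.sub_apply, Matrix.smul_apply, Matrix.of_apply, smul_eq_mul]; norm_num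
@[simp] lemma lc_apply_2_4 : lc x0 x1 x2 x3 x4 x5 x6 x7 x8 x9 x10 x11 2 4 = -x11 := by simp (config := { decide := true }) only [lc, mA, mB, mC, mA', mB', mC', mP, mQ, mR, mP', mQ', mR', Eij, Matrix.single, Matrix.add_apply, Matrix.sub_apply, Matrix.smul_apply, Matrix.of_apply, smul_eq_mul]; norm_num
@[simp] lemma lc_apply_2_5 : lc x0 x1 x2 x3 x4 x5 x6 x7 x8 x9 x10 x11 2 5 = 0 := by simp (config := { decide := true }) only [lc, mA, mB, mC, mA', mB', mC', mP, mQ, mR, mP', mQ', mR', Eij, Matrix.single, Matrix.add_apply, Matrix.sub_apply, Matrix.smul_apply, Matrix.of_apply, smul_eq_mul]; norm_num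
@[simp] lemma lc_apply_2_6 : lc x0 x1 x2 x3 x4 x5 x6 x7 x8 x9 x10 x11 2 6 = x9 := by simp (config := { decide := true }) only [lc, mA, mB, mC, mA', mB', mC', mP, mQ, mR, mP', mQ', mR', Eij, Matrix.single, Matrix.add_apply, Matrix.sub_apply, Matrix.smul_apply, Matrix.of_apply, smul_eq_mul]; norm_num
@[simp] lemma lc_apply_3_0 : lc x0 x1 x2 x3 x4 x5 x6 x7 x8 x9 x10 x11 3 0 = -x2 := by simp (config := { decide := true }) only [lc, mA, mB, mC, mA', mB', mC', mP, mQ, mR, mP', mQ', mR', Eij, Matrix.single, Matrix.add_apply, Matrix.sub_apply, Matrix.smul_apply, Matrix.of_apply, smul_eq_mul]; norm_num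
@[simp] lemma lc_apply_3_1 : lc x0 x1 x2 x3 x4 x5 x6 x7 x8 x9 x10 x11 3 1 = x7 := by simp (config := { decide := true }) only [lc, mA, mB, mC, mA', mB', mC', mP, mQ, mR, mP', mQ', mR', Eij, Matrix.single, Matrix.add_apply, Matrix.sub_apply, Matrix.smul_apply, Matrix.of_apply, smul_eq_mul]; norm_num
@[simp] lemma lc_apply_3_2 : lc x0 x1 x2 x3 x4 x5 x6 x7 x8 x9 x10 x11 3 2 = -x6 := by simp (config := { decide := true }) only [lc, mA, mB, mC, mA', mB', mC', mP, mQ, mR, mP', mQ', mR', Eij, Matrix.single, Matrix.add_apply, Matrix.sub_apply, Matrix.smul_apply, Matrix.of_apply, smul_eq_mul]; norm_num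
@[simp] lemma lc_apply_3_3 : lc x0 x1 x2 x3 x4 x5 x6 x7 x8 x9 x10 x11 3 3 = 0 := by simp (config := { decide := true }) only [lc, mA, mB, mC, mA', mB', mC', mP, mQ, mR, mP', mQ', mR', Eij, Matrix.single, Matrix.add_apply, Matrix.sub_apply, Matrix.smul_apply, Matrix.of_apply, smul_eq_mul]; norm_num
@[simp] lemma lc_apply_3_4 : lc x0 x1 x2 x3 x4 x5 x6 x7 x8 x9 x10 x11 3 4 = x10 := by simp (config := { decide := true }) only [lc, mA, mB, mC, mA', mB', mC', mP, mQ, mR, mP', mQ', mR', Eij, Matrix.single, Matrix.add_apply, Matrix.sub_apply, Matrix.smul_apply, Matrix.of_apply, smul_eq_mul]; norm_num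
@[simp] lemma lc_apply_3_5 : lc x0 x1 x2 x3 x4 x5 x6 x7 x8 x9 x10 x11 3 5 = -x9 := by simp (config := { decide := true }) only [lc, mA, mB, mC, mA', mB', mC', mP, mQ, mR, mP', mQ', mR', Eij, Matrix.single, Matrix.add_apply, Matrix.sub_apply, Matrix.smul_apply, Matrix.of_apply, smul_eq_mul]; norm_num
@[simp] lemma lc_apply_3_6 : lc x0 x1 x2 x3 x4 x5 x6 x7 x8 x9 x10 x11 3 6 = 0 := by simp (config := { decide := true }) only [lc, mA, mB, mC, mA', mB', mC', mP, mQ, mR, mP', mQ', mR', Eij, Matrix.single, Matrix.add_apply, Matrix.sub_apply, Matrix.smul_apply, Matrix.of_apply, smul_eq_mul]; norm_num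
@[simp] lemma lc_apply_4_0 : lc x0 x1 x2 x3 x4 x5 x6 x7 x8 x9 x10 x11 4 0 = -x3 := by simp (config := { decide := true }) only [lc, mA, mB, mC, mA', mB', mC', mP, mQ, mR, mP', mQ', mR', Eij, Matrix.single, Matrix.add_apply, Matrix.sub_apply, Matrix.smul_apply, Matrix.of_apply, smul_eq_mul]; norm_num
@[simp] lemma lc_apply_4_1 : lc x0 x1 x2 x3 x4 x5 x6 x7 x8 x9 x10 x11 4 1 = 0 := by simp (config := { decide := true }) only [lc, mA, mB, mC, mA', mB', mC', mP, mQ, mR, mP', mQ', mR', Eij, Matrix.single, Matrix.add_apply, Matrix.sub_apply, Matrix.smul_apply, Matrix.of_apply, smul_eq_mul]; norm_num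
@[simp] lemma lc_apply_4_2 : lc x0 x1 x2 x3 x4 x5 x6 x7 x8 x9 x10 x11 4 2 = x11 := by simp (config := { decide := true }) only [lc, mA, mB, mC, mA', mB', mC', mP, mQ, mR, mP', mQ', mR', Eij, Matrix.single, Matrix.add_apply, Matrix.sub_apply, Matrix.smul_apply, Matrix.of_apply, smul_eq_mul]; norm_num
@[simp] lemma lc_apply_4_3 : lc x0 x1 x2 x3 x4 x5 x6 x7 x8 x9 x10 x11 4 3 = -x10 := by simp (config := { decide := true }) only [lc, mA, mB, mC, mA', mB', mC', mP, mQ, mR, mP', mQ', mR', Eij, Matrix.single, Matrix.add_apply, Matrix.sub_apply, Matrix.smul_apply, Matrix.of_apply, smul_eq_mul]; norm_num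
@[simp] lemma lc_apply_4_4 : lc x0 x1 x2 x3 x4 x5 x6 x7 x8 x9 x10 x11 4 4 = 0 := by simp (config := { decide := true }) only [lc, mA, mB, mC, mA', mB', mC', mP, mQ, mR, mP', mQ', mR', Eij, Matrix.single, Matrix.add_apply, Matrix.sub_apply, Matrix.smul_apply, Matrix.of_apply, smul_eq_mul]; norm_num
@[simp] lemma lc_apply_4_5 : lc x0 x1 x2 x3 x4 x5 x6 x7 x8 x9 x10 x11 4 5 = -x8 := by simp (config := { decide := true }) only [lc, mA, mB, mC, mA', mB', mC', mP, mQ, mR, mP', mQ', mR', Eij, Matrix.single, Matrix.add_apply, Matrix.sub_apply, Matrix.smul_apply, Matrix.of_apply, smul_eq_mul]; norm_num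
@[simp] lemma lc_apply_4_6 : lc x0 x1 x2 x3 x4 x5 x6 x7 x8 x9 x10 x11 4 6 = x7 := by simp (config := { decide := true }) only [lc, mA, mB, mC, mA', mB', mC', mP, mQ, mR, mP', mQ', mR', Eij, Matrix.single, Matrix.add_apply, Matrix.sub_apply, Matrix.smul_apply, Matrix.of_apply, smul_eq_mul]; norm_num
@[simp] lemma lc_apply_5_0 : lc x0 x1 x2 x3 x4 x5 x6 x7 x8 x9 x10 x11 5 0 = -x4 := by simp (config := { decide := true }) only [lc, mA, mB, mC, mA', mB', mC', mP, mQ, mR, mP', mQ', mR', Eij, Matrix.single, Matrix.add_apply, Matrix.sub_apply, Matrix.smul_apply, Matrix.of_apply, smul_eq_mul]; norm_num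
@[simp] lemma lc_apply_5_1 : lc x0 x1 x2 x3 x4 x5 x6 x7 x8 x9 x10 x11 5 1 = -x11 := by simp (config := { decide := true }) only [lc, mA, mB, mC, mA', mB', mC', mP, mQ, mR, mP', mQ', mR', Eij, Matrix.single, Matrix.add_apply, Matrix.sub_apply, Matrix.smul_apply, Matrix.of_apply, smul_eq_mul]; norm_num
@[simp] lemma lc_apply_5_2 : lc x0 x1 x2 x3 x4 x5 x6 x7 x8 x9 x10 x11 5 2 = 0 := by simp (config := { decide := true }) only [lc, mA, mB, mC, mA', mB', mC', mP, mQ, mR, mP', mQ', mR', Eij, Matrix.single, Matrix.add_apply, Matrix.sub_apply, Matrix.smul_apply, Matrix.of_apply, smul_eq_mul]; norm_num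
@[simp] lemma lc_apply_5_3 : lc x0 x1 x2 x3 x4 x5 x6 x7 x8 x9 x10 x11 5 3 = x9 := by simp (config := { decide := true }) only [lc, mA, mB, mC, mA', mB', mC', mP, mQ, mR, mP', mQ', mR', Eij, Matrix.single, Matrix.add_apply, Matrix.sub_apply, Matrix.smul_apply, Matrix.of_apply, smul_eq_mul]; norm_num
@[simp] lemma lc_apply_5_4 : lc x0 x1 x2 x3 x4 x5 x6 x7 x8 x9 x10 x11 5 4 = x8 := by simp (config := { decide := true }) only [lc, mA, mB, mC, mA', mB', mC', mP, mQ, mR, mP', mQ', mR', Eij, Matrix.single, Matrix.add_apply, Matrix.sub_apply, Matrix.smul_apply, Matrix.of_apply, smul_eq_mul]; norm_num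
@[simp] lemma lc_apply_5_5 : lc x0 x1 x2 x3 x4 x5 x6 x7 x8 x9 x10 x11 5 5 = 0 := by simp (config := { decide := true }) only [lc, mA, mB, mC, mA', mB', mC', mP, mQ, mR, mP', mQ', mR', Eij, Matrix.single, Matrix.add_apply, Matrix.sub_apply, Matrix.smul_apply, Matrix.of_apply, smul_eq_mul]; norm_num
@[simp] lemma lc_apply_5_6 : lc x0 x1 x2 x3 x4 x5 x6 x7 x8 x9 x10 x11 5 6 = -x6 := by simp (config := { decide := true }) only [lc, mA, mB, mC, mA', mB', mC', mP, mQ, mR, mP', mQ', mR', Eij, Matrix.single, Matrix.add_apply, Matrix.sub_apply, Matrix.smul_apply, Matrix.of_apply, smul_eq_mul]; norm_num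
@[simp] lemma lc_apply_6_0 : lc x0 x1 x2 x3 x4 x5 x6 x7 x8 x9 x10 x11 6 0 = -x5 := by simp (config := { decide := true }) only [lc, mA, mB, mC, mA', mB', mC', mP, mQ, mR, mP', mQ', mR', Eij, Matrix.single, Matrix.add_apply, Matrix.sub_apply, Matrix.smul_apply, Matrix.of_apply, smul_eq_mul]; norm_num
@[simp] lemma lc_apply_6_1 : lc x0 x1 x2 x3 x4 x5 x6 x7 x8 x9 x10 x11 6 1 = x10 := by simp (config := { decide := true }) only [lc, mA, mB, mC, mA', mB', mC', mP, mQ, mR, mP', mQ', mR', Eij, Matrix.single, Matrix.add_apply, Matrix.sub_apply, Matrix.smul_apply, Matrix.of_apply, smul_eq_mul]; norm_num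
@[simp] lemma lc_apply_6_2 : lc x0 x1 x2 x3 x4 x5 x6 x7 x8 x9 x10 x11 6 2 = -x9 := by simp (config := { decide := true }) only [lc, mA, mB, mC, mA', mB', mC', mP, mQ, mR, mP', mQ', mR', Eij, Matrix.single, Matrix.add_apply, Matrix.sub_apply, Matrix.smul_apply, Matrix.of_apply, smul_eq_mul]; norm_num
@[simp] lemma lc_apply_6_3 : lc x0 x1 x2 x3 x4 x5 x6 x7 x8 x9 x10 x11 6 3 = 0 := by simp (config := { decide := true }) only [lc, mA, mB, mC, mA', mB', mC', mP, mQ, mR, mP', mQ', mR', Eij, Matrix.single, Matrix.add_apply, Matrix.sub_apply, Matrix.smul_apply, Matrix.of_apply, smul_eq_mul]; norm_num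
@[simp] lemma lc_apply_6_4 : lc x0 x1 x2 x3 x4 x5 x6 x7 x8 x9 x10 x11 6 4 = -x7 := by simp (config := { decide := true }) only [lc, mA, mB, mC, mA', mB', mC', mP, mQ, mR, mP', mQ', mR', Eij, Matrix.single, Matrix.add_apply, Matrix.sub_apply, Matrix.smul_apply, Matrix.of_apply, smul_eq_mul]; norm_num
@[simp] lemma lc_apply_6_5 : lc x0 x1 x2 x3 x4 x5 x6 x7 x8 x9 x10 x11 6 5 = x6 := by simp (config := { decide := true }) only [lc, mA, mB, mC, mA', mB', mC', mP, mQ, mR, mP', mQ', mR', Eij, Matrix.single, Matrix.add_apply, Matrix.sub_apply, Matrix.smul_apply, Matrix.of_apply, smul_eq_mul]; norm_num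
@[simp] lemma lc_apply_6_6 : lc x0 x1 x2 x3 x4 x5 x6 x7 x8 x9 x10 x11 6 6 = 0 := by simp (config := { decide := true }) only [lc, mA, mB, mC, mA', mB', mC', mP, mQ, mR, mP', mQ', mR', Eij, Matrix.single, Matrix.add_apply, Matrix.sub_apply, Matrix.smul_apply, Matrix.of_apply, smul_eq_mul]; norm_num

lemma Iop_lc : Iop (lc x0 x1 x2 x3 x4 x5 x6 x7 x8 x9 x10 x11)
    = lc (-x3) (-x4) (-x5) x0 x1 x2 (-x9) (-x10) (-x11) x6 x7 x8 := by
  simp only [Iop, fa, fb, fc, fa', fb', fc', fp, fq, fr, fp', fq', fr',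
    lc_apply_0_0, lc_apply_0_1, lc_apply_0_2, lc_apply_0_3, lc_apply_0_4, lc_apply_0_5, lc_apply_0_6, lc_apply_1_0, lc_apply_1_1, lc_apply_1_2, lc_apply_1_3, lc_apply_1_4, lc_apply_1_5, lc_apply_1_6, lc_apply_2_0, lc_apply_2_1, lc_apply_2_2, lc_apply_2_3, lc_apply_2_4, lc_apply_2_5, lc_apply_2_6, lc_apply_3_0, lc_apply_3_1, lc_apply_3_2, lc_apply_3_3, lc_apply_3_4, lc_apply_3_5, lc_apply_3_6, lc_apply_4_0, lc_apply_4_1, lc_apply_4_2, lc_apply_4_3, lc_apply_4_4, lc_apply_4_5, lc_apply_4_6, lc_apply_5_0, lc_apply_5_1, lc_apply_5_2, lc_apply_5_3, lc_apply_5_4, lc_apply_5_5, lc_apply_5_6, lc_apply_6_0, lc_apply_6_1, lc_apply_6_2, lc_apply_6_3, lc_apply_6_4, lc_apply_6_5, lc_apply_6_6]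
  simp only [lc]
  module

set_option maxHeartbeats 2000000 in
lemma key_stmt19 (x0 x1 x2 x3 x4 x5 x6 x7 x8 x9 x10 x11 y0 y1 y2 y3 y4 y5 y6 y7 y8 y9 y10 y11 : ℝ) :
      (dM1 fa (Iop (lc x0 x1 x2 x3 x4 x5 x6 x7 x8 x9 x10 x11)) (Iop (lc y0 y1 y2 y3 y4 y5 y6 y7 y8 y9 y10 y11)) = dM1 fa (lc x0 x1 x2 x3 x4 x5 x6 x7 x8 x9 x10 x11) (lc y0 y1 y2 y3 y4 y5 y6 y7 y8 y9 y10 y11)) ∧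
      (dM1 fa' (Iop (lc x0 x1 x2 x3 x4 x5 x6 x7 x8 x9 x10 x11)) (Iop (lc y0 y1 y2 y3 y4 y5 y6 y7 y8 y9 y10 y11)) = dM1 fa' (lc x0 x1 x2 x3 x4 x5 x6 x7 x8 x9 x10 x11) (lc y0 y1 y2 y3 y4 y5 y6 y7 y8 y9 y10 y11)) ∧
      (dM1 fp (Iop (lc x0 x1 x2 x3 x4 x5 x6 x7 x8 x9 x10 x11)) (lc y0 y1 y2 y3 y4 y5 y6 y7 y8 y9 y10 y11) = -(dM1 fp' (lc x0 x1 x2 x3 x4 x5 x6 x7 x8 x9 x10 x11) (lc y0 y1 y2 y3 y4 y5 y6 y7 y8 y9 y10 y11))) ∧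
      (dM1 fp' (Iop (lc x0 x1 x2 x3 x4 x5 x6 x7 x8 x9 x10 x11)) (lc y0 y1 y2 y3 y4 y5 y6 y7 y8 y9 y10 y11) = dM1 fp (lc x0 x1 x2 x3 x4 x5 x6 x7 x8 x9 x10 x11) (lc y0 y1 y2 y3 y4 y5 y6 y7 y8 y9 y10 y11)) ∧
      (dM1 fb (Iop (lc x0 x1 x2 x3 x4 x5 x6 x7 x8 x9 x10 x11)) (Iop (lc y0 y1 y2 y3 y4 y5 y6 y7 y8 y9 y10 y11)) = dM1 fb (lc x0 x1 x2 x3 x4 x5 x6 x7 x8 x9 x10 x11) (lc y0 y1 y2 y3 y4 y5 y6 y7 y8 y9 y10 y11)) ∧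
      (dM1 fb' (Iop (lc x0 x1 x2 x3 x4 x5 x6 x7 x8 x9 x10 x11)) (Iop (lc y0 y1 y2 y3 y4 y5 y6 y7 y8 y9 y10 y11)) = dM1 fb' (lc x0 x1 x2 x3 x4 x5 x6 x7 x8 x9 x10 x11) (lc y0 y1 y2 y3 y4 y5 y6 y7 y8 y9 y10 y11)) ∧
      (dM1 fq (Iop (lc x0 x1 x2 x3 x4 x5 x6 x7 x8 x9 x10 x11)) (lc y0 y1 y2 y3 y4 y5 y6 y7 y8 y9 y10 y11) = -(dM1 fq' (lc x0 x1 x2 x3 x4 x5 x6 x7 x8 x9 x10 x11) (lc y0 y1 y2 y3 y4 y5 y6 y7 y8 y9 y10 y11))) ∧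
      (dM1 fq' (Iop (lc x0 x1 x2 x3 x4 x5 x6 x7 x8 x9 x10 x11)) (lc y0 y1 y2 y3 y4 y5 y6 y7 y8 y9 y10 y11) = dM1 fq (lc x0 x1 x2 x3 x4 x5 x6 x7 x8 x9 x10 x11) (lc y0 y1 y2 y3 y4 y5 y6 y7 y8 y9 y10 y11)) ∧
      (dM1 fc (Iop (lc x0 x1 x2 x3 x4 x5 x6 x7 x8 x9 x10 x11)) (Iop (lc y0 y1 y2 y3 y4 y5 y6 y7 y8 y9 y10 y11)) = dM1 fc (lc x0 x1 x2 x3 x4 x5 x6 x7 x8 x9 x10 x11) (lc y0 y1 y2 y3 y4 y5 y6 y7 y8 y9 y10 y11)) ∧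
      (dM1 fc' (Iop (lc x0 x1 x2 x3 x4 x5 x6 x7 x8 x9 x10 x11)) (Iop (lc y0 y1 y2 y3 y4 y5 y6 y7 y8 y9 y10 y11)) = dM1 fc' (lc x0 x1 x2 x3 x4 x5 x6 x7 x8 x9 x10 x11) (lc y0 y1 y2 y3 y4 y5 y6 y7 y8 y9 y10 y11)) ∧
      (dM1 fr (Iop (lc x0 x1 x2 x3 x4 x5 x6 x7 x8 x9 x10 x11)) (lc y0 y1 y2 y3 y4 y5 y6 y7 y8 y9 y10 y11) = -(dM1 fr' (lc x0 x1 x2 x3 x4 x5 x6 x7 x8 x9 x10 x11) (lc y0 y1 y2 y3 y4 y5 y6 y7 y8 y9 y10 y11))) ∧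
      (dM1 fr' (Iop (lc x0 x1 x2 x3 x4 x5 x6 x7 x8 x9 x10 x11)) (lc y0 y1 y2 y3 y4 y5 y6 y7 y8 y9 y10 y11) = dM1 fr (lc x0 x1 x2 x3 x4 x5 x6 x7 x8 x9 x10 x11) (lc y0 y1 y2 y3 y4 y5 y6 y7 y8 y9 y10 y11)) := by
  refine ⟨?_, ?_, ?_, ?_, ?_, ?_, ?_, ?_, ?_, ?_, ?_, ?_⟩ <;>
  · simp only [Iop_lc, dM1, bk, fa, fb, fc, fa', fb', fc', fp, fq, fr, fp', fq', fr', Matrix.sub_apply, Matrix.mul_apply,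
      Fin.sum_univ_seven, lc_apply_0_0, lc_apply_0_1, lc_apply_0_2, lc_apply_0_3, lc_apply_0_4, lc_apply_0_5, lc_apply_0_6, lc_apply_1_0, lc_apply_1_1, lc_apply_1_2, lc_apply_1_3, lc_apply_1_4, lc_apply_1_5, lc_apply_1_6, lc_apply_2_0, lc_apply_2_1, lc_apply_2_2, lc_apply_2_3, lc_apply_2_4, lc_apply_2_5, lc_apply_2_6, lc_apply_3_0, lc_apply_3_1, lc_apply_3_2, lc_apply_3_3, lc_apply_3_4, lc_apply_3_5, lc_apply_3_6, lc_apply_4_0, lc_apply_4_1, lc_apply_4_2, lc_apply_4_3, lc_apply_4_4, lc_apply_4_5, lc_apply_4_6, lc_apply_5_0, lc_apply_5_1, lc_apply_5_2, lc_apply_5_3, lc_apply_5_4, lc_apply_5_5, lc_apply_5_6, lc_apply_6_0, lc_apply_6_1, lc_apply_6_2, lc_apply_6_3, lc_apply_6_4, lc_apply_6_5, lc_apply_6_6]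
    ring

end AuxStmt19

/-- integrability of I: d_Ma and d_Ma' are of type (1,1) for I, while
d_Mp + i d_Mp' is of type (2,0) for I; together with the cyclic analogues. -/
theorem stmt19 :
    ∀ X ∈ mm, ∀ Y ∈ mm,
      (dM1 fa (Iop X) (Iop Y) = dM1 fa X Y) ∧
      (dM1 fa' (Iop X) (Iop Y) = dM1 fa' X Y) ∧
      (dM1 fp (Iop X) Y = -(dM1 fp' X Y)) ∧
      (dM1 fp' (Iop X) Y = dM1 fp X Y) ∧
      (dM1 fb (Iop X) (Iop Y) = dM1 fb X Y) ∧
      (dM1 fb' (Iop X) (Iop Y) = dM1 fb' X Y) ∧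
      (dM1 fq (Iop X) Y = -(dM1 fq' X Y)) ∧
      (dM1 fq' (Iop X) Y = dM1 fq X Y) ∧
      (dM1 fc (Iop X) (Iop Y) = dM1 fc X Y) ∧
      (dM1 fc' (Iop X) (Iop Y) = dM1 fc' X Y) ∧
      (dM1 fr (Iop X) Y = -(dM1 fr' X Y)) ∧
      (dM1 fr' (Iop X) Y = dM1 fr X Y) := by
  intro X hX Y hY
  obtain ⟨a1, aZ1, ah1, rfl⟩ := Submodule.mem_span_insert.mp hX
  obtain ⟨a2, aZ2, ah2, rfl⟩ := Submodule.mem_span_insert.mp ah1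
  obtain ⟨a3, aZ3, ah3, rfl⟩ := Submodule.mem_span_insert.mp ah2
  obtain ⟨a4, aZ4, ah4, rfl⟩ := Submodule.mem_span_insert.mp ah3
  obtain ⟨a5, aZ5, ah5, rfl⟩ := Submodule.mem_span_insert.mp ah4
  obtain ⟨a6, aZ6, ah6, rfl⟩ := Submodule.mem_span_insert.mp ah5
  obtain ⟨a7, aZ7, ah7, rfl⟩ := Submodule.mem_span_insert.mp ah6
  obtain ⟨a8, aZ8, ah8, rfl⟩ := Submodule.mem_span_insert.mp ah7
  obtain ⟨a9, aZ9, ah9, rfl⟩ := Submodule.mem_span_insert.mp ah8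
  obtain ⟨a10, aZ10, ah10, rfl⟩ := Submodule.mem_span_insert.mp ah9
  obtain ⟨a11, aZ11, ah11, rfl⟩ := Submodule.mem_span_insert.mp ah10
  obtain ⟨a12, rfl⟩ := Submodule.mem_span_singleton.mp ah11
  obtain ⟨b1, bZ1, bh1, rfl⟩ := Submodule.mem_span_insert.mp hY
  obtain ⟨b2, bZ2, bh2, rfl⟩ := Submodule.mem_span_insert.mp bh1
  obtain ⟨b3, bZ3, bh3, rfl⟩ := Submodule.mem_span_insert.mp bh2
  obtain ⟨b4, bZ4, bh4, rfl⟩ := Submodule.mem_span_insert.mp bh3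
  obtain ⟨b5, bZ5, bh5, rfl⟩ := Submodule.mem_span_insert.mp bh4
  obtain ⟨b6, bZ6, bh6, rfl⟩ := Submodule.mem_span_insert.mp bh5
  obtain ⟨b7, bZ7, bh7, rfl⟩ := Submodule.mem_span_insert.mp bh6
  obtain ⟨b8, bZ8, bh8, rfl⟩ := Submodule.mem_span_insert.mp bh7
  obtain ⟨b9, bZ9, bh9, rfl⟩ := Submodule.mem_span_insert.mp bh8
  obtain ⟨b10, bZ10, bh10, rfl⟩ := Submodule.mem_span_insert.mp bh9
  obtain ⟨b11, bZ11, bh11, rfl⟩ := Submodule.mem_span_insert.mp bh10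
  obtain ⟨b12, rfl⟩ := Submodule.mem_span_singleton.mp bh11
  exact key_stmt19 a1 a2 a3 a4 a5 a6 a7 a8 a9 a10 a11 a12 b1 b2 b3 b4 b5 b6 b7 b8 b9 b10 b11 b12
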